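/- Every vertex-transitive non-synchronizing graph is non-separating; equivalently, if a finite vertex-transitive graph Γ is neither null nor complete and ω(Γ) = χ(Γ), then ω(Γ)·α(Γ) = |V(Γ)|. -/

import Mathlib

open SimpleGraph

/-- The independence number of a graph: the clique number of its complement. -/
noncomputable def SimpleGraph.indepNumOfCompl {V : Type*} (G : SimpleGraph V) : ℕ :=
  Gᶜ.cliqueNum

/-- A graph is vertex-transitive if its automorphism group is transitive on vertices. -/
def SimpleGraph.IsVertexTransitive {V : Type*} (G : SimpleGraph V) : Prop :=
  ∀ u v : V, ∃ φ : G ≃g G, φ u = v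

section CliqueCocliqueAux
open Finset MulAction
variable {V : Type*} [Fintype V] (G : SimpleGraph V)

variable {V : Type*} [Fintype V] (G : SimpleGraph V)

/-- color-class bound : n ≤ k * α -/
lemma aux_card_le_colorable_mul_indep {k : ℕ} (hc : G.Colorable k) :
    Fintype.card V ≤ k * Gᶜ.cliqueNum := by
  classical
  obtain ⟨C⟩ := hc
  have hfib : ∀ i : Fin k, ((Finset.univ.filter fun v => C v = i)).card ≤ Gᶜ.cliqueNum := by
    intro i
    apply SimpleGraph.IsClique.card_le_cliqueNum (tc := ?_)
    intro u hu v hv huv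
    simp only [coe_filter, Set.mem_setOf_eq, mem_univ, true_and] at hu hv
    rw [SimpleGraph.compl_adj]
    exact ⟨huv, fun hadj => C.valid hadj (hu.trans hv.symm)⟩
  calc Fintype.card V = ∑ i : Fin k, ((Finset.univ.filter fun v => C v = i)).card := by
        rw [← Finset.card_univ]
        exact Finset.card_eq_sum_card_fiberwise (fun v _ => Finset.mem_univ _)
    _ ≤ ∑ _i : Fin k, Gᶜ.cliqueNum := Finset.sum_le_sum fun i _ => hfib i
    _ = k * Gᶜ.cliqueNum := by simp [Finset.sum_const, mul_comm]


end CliqueCocliqueAux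

section
open MulAction
variable {V : Type*} [Fintype V] (G : SimpleGraph V)

lemma aux_clique_coclique (hvt : G.IsVertexTransitive) :
    G.cliqueNum * Gᶜ.cliqueNum ≤ Fintype.card V := by
  classical
  obtain ⟨C, hC⟩ := G.exists_isNClique_cliqueNum
  obtain ⟨A, hA⟩ := Gᶜ.exists_isNClique_cliqueNum
  set H : Subgroup (Equiv.Perm V) :=
    { carrier := {π | ∀ u v, G.Adj (π u) (π v) ↔ G.Adj u v}
      mul_mem' := fun {a b} ha hb u v => by
        simp only [Equiv.Perm.coe_mul, Function.comp_apply]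
        rw [ha, hb]
      one_mem' := fun u v => by simp
      inv_mem' := fun {a} ha u v => by
        have := ha (a⁻¹ u) (a⁻¹ v)
        simpa using this.symm } with hHdef
  have hsmul : ∀ (g : H) (v : V), g • v = (g : Equiv.Perm V) v := fun g v => rfl
  have htrans : ∀ u v : V, ∃ g : H, (g : Equiv.Perm V) u = v := by
    intro u v
    obtain ⟨φ, hφ⟩ := hvt u v
    exact ⟨⟨φ.toEquiv, fun a b => φ.map_adj_iff⟩, hφ⟩
  have horb : ∀ c : V, orbit H c = Set.univ := by
    intro c
    apply Set.eq_univ_of_forall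
    intro v
    obtain ⟨g, hg⟩ := htrans c v
    exact ⟨g, hg⟩
  have hcardorb : ∀ c : V, Fintype.card (orbit H c) = Fintype.card V := by
    intro c
    exact Fintype.card_congr ((Equiv.setCongr (horb c)).trans (Equiv.Set.univ V))
  have hos : ∀ c : V, Fintype.card V * Fintype.card (stabilizer H c) = Fintype.card H := by
    intro c
    rw [← hcardorb c]
    exact card_orbit_mul_card_stabilizer_eq_card_group H c
  -- the double count
  set N : ℕ := ∑ g : H, (C.filter fun c => (g : Equiv.Perm V) c ∈ A).card with hN
  have hupper : N ≤ Fintype.card H := by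
    calc N ≤ ∑ _g : H, 1 := by
          apply Finset.sum_le_sum
          intro g _
          apply Finset.card_le_one.mpr
          intro c hc c' hc'
          simp only [Finset.mem_filter] at hc hc'
          by_contra hne
          have hadj : G.Adj c c' := hC.isClique hc.1 hc'.1 hne
          have hadj' : G.Adj ((g : Equiv.Perm V) c) ((g : Equiv.Perm V) c') :=
            (g.2 c c').mpr hadj
          have : Gᶜ.Adj ((g : Equiv.Perm V) c) ((g : Equiv.Perm V) c') :=
            hA.isClique hc.2 hc'.2 (fun h => hne ((g : Equiv.Perm V).injective h))
          exact this.2 hadj'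
      _ = Fintype.card H := by simp
  have hfibcard : ∀ (c a : V), a ∈ A →
      (Finset.univ.filter fun g : H => (g : Equiv.Perm V) c = a).card
        = Fintype.card (stabilizer H c) := by
    intro c a _
    obtain ⟨g₀, hg₀⟩ := htrans c a
    rw [← Fintype.card_subtype]
    apply Fintype.card_congr
    refine ⟨fun x => ⟨g₀⁻¹ * x.1, ?_⟩, fun y => ⟨g₀ * y.1, ?_⟩, ?_, ?_⟩
    · rw [mem_stabilizer_iff, Subgroup.smul_def, Equiv.Perm.smul_def]
      simp only [Subgroup.coe_mul, Equiv.Perm.mul_apply, x.2]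
      rw [← hg₀]
      simp
    · have h2 : (y.1 : Equiv.Perm V) c = c := by
        have := y.2
        rw [mem_stabilizer_iff, Subgroup.smul_def, Equiv.Perm.smul_def] at this
        exact this
      simp only [Subgroup.coe_mul, Equiv.Perm.mul_apply, h2, hg₀]
    · intro x; ext; simp
    · intro y; ext; simp
  have hexact : Fintype.card V * N = C.card * A.card * Fintype.card H := by
    have step1 : N = ∑ c ∈ C, (Finset.univ.filter fun g : H => (g : Equiv.Perm V) c ∈ A).card := by
      rw [hN]
      simp only [Finset.card_filter]
      rw [Finset.sum_comm]
    have step2 : ∀ c ∈ C, (Finset.univ.filter fun g : H => (g : Equiv.Perm V) c ∈ A).card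
        = A.card * Fintype.card (stabilizer H c) := by
      intro c _
      rw [Finset.card_eq_sum_card_fiberwise
        (s := Finset.univ.filter fun g : H => (g : Equiv.Perm V) c ∈ A)
        (f := fun g : H => (g : Equiv.Perm V) c) (t := A)
        (fun g hg => (Finset.mem_filter.mp hg).2)]
      rw [Finset.sum_congr rfl fun a ha => ?_]
      · rw [Finset.sum_const, smul_eq_mul]
      · rw [Finset.filter_filter,
          Finset.filter_congr (fun g _ => by
            constructor
            · exact fun h => h.2
            · exact fun h => ⟨show (g : Equiv.Perm V) c ∈ A by rw [h]; exact ha, h⟩)]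
        exact hfibcard c a ha
    rw [step1, Finset.mul_sum]
    rw [Finset.sum_congr rfl fun c hc => by
      rw [step2 c hc, ← mul_assoc, mul_comm (Fintype.card V) A.card, mul_assoc, hos c]]
    rw [Finset.sum_const, smul_eq_mul, ← mul_assoc, mul_comm C.card A.card, mul_comm A.card C.card]
  have hHpos : 0 < Fintype.card H := Fintype.card_pos
  have : C.card * A.card * Fintype.card H ≤ Fintype.card V * Fintype.card H := by
    rw [← hexact]
    exact Nat.mul_le_mul_left _ hupper
  have hfin : C.card * A.card ≤ Fintype.card V := Nat.le_of_mul_le_mul_right this hHpos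
  rwa [hC.card_eq, hA.card_eq] at hfin

end

/-- Every vertex-transitive non-synchronizing graph is non-separating: if a finite
vertex-transitive graph is neither null nor complete and `ω(Γ) = χ(Γ)`, then
`ω(Γ)·α(Γ) = |V(Γ)|`. -/
theorem stmt_2 {V : Type*} [Fintype V] (G : SimpleGraph V)
    (hvt : G.IsVertexTransitive) (hnn : G ≠ ⊥) (hnc : G ≠ ⊤)
    (hωχ : (G.cliqueNum : ℕ∞) = G.chromaticNumber) :
    G.cliqueNum * G.indepNumOfCompl = Fintype.card V := by
  have hne : G.chromaticNumber ≠ ⊤ := by rw [← hωχ]; exact ENat.coe_ne_top _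
  have htn : (G.chromaticNumber).toNat = G.cliqueNum := by
    rw [← hωχ]; simp
  have hcol : G.Colorable G.cliqueNum := htn ▸ G.colorable_chromaticNumber_of_fintype
  exact le_antisymm (aux_clique_coclique G hvt)
    (aux_card_le_colorable_mul_indep G hcol)
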